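/- Let R be a commutative ring and M an R-module such that every non-zerodivisor on M is a non-zerodivisor of R; let U be the set of non-zerodivisors on M, and let k be a nonnegative integer. Identify the total quotient ring of R(+)M with (U⁻¹R)(+)(U⁻¹M), and write each F ∈ ((U⁻¹R)(+)(U⁻¹M))[X] uniquely as F = f + hε with f ∈ (U⁻¹R)[X] and h ∈ (U⁻¹M)[X] (a polynomial with coefficients in the module U⁻¹M). Then F^(j)(z) ∈ R(+)M for all z ∈ R(+)M and all 0 ≤ j ≤ k if and only if: (i) f^(j)(x) ∈ R for all x ∈ R and 0 ≤ j ≤ k, (ii) f^(j)(x)·m ∈ M for all x ∈ R, m ∈ M, and 0 ≤ j ≤ k+1, and (iii) h^(j)(x) ∈ M for all x ∈ R and 0 ≤ j ≤ k. That is, Int^(k)(R(+)M) = (Int^(k+1)_M(R) ∩ Int^(k)(R)) + Int^(k)(R, M)·ε. -/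

import Mathlib

open Polynomial TrivSqZeroExt


section myaux
variable {A N : Type*} [CommRing A] [AddCommGroup N] [Module A N]
  [Module Aᵐᵒᵖ N] [IsCentralScalar A N]

lemma my_inr_mul (s : N) (x : TrivSqZeroExt A N) :
    (inr s * x : TrivSqZeroExt A N) = inr (x.fst • s) := by
  ext
  · simp [fst_mul]
  · simp [snd_mul, op_smul_eq_smul]

lemma my_pow_inl_add_inr (a : A) (m : N) (n : ℕ) :
    ((inl a + inr m : TrivSqZeroExt A N)) ^ n
      = inl (a ^ n) + inr ((n * a ^ (n - 1)) • m) := by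
  ext
  · simp [fst_pow]
  · simp only [snd_pow, snd_add, snd_inl, snd_inr, zero_add, fst_add, fst_inl, fst_inr,
      add_zero, mul_smul, Nat.cast_smul_eq_nsmul, Nat.pred_eq_sub_one]

lemma my_eval_map_inl (p : Polynomial A) (a : A) (m : N) :
    (p.map (inlHom A N)).eval (inl a + inr m)
      = inl (p.eval a) + inr ((derivative p).eval a • m) := by
  induction p using Polynomial.induction_on' with
  | add p q hp hq =>
      rw [Polynomial.map_add, eval_add, hp, hq]
      simp only [derivative_add, eval_add, add_smul, inl_add, inr_add]
      abel
  | monomial n c =>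
      rw [map_monomial, eval_monomial, derivative_monomial, eval_monomial, inlHom_apply,
        my_pow_inl_add_inr, mul_add, inl_mul_inl, inl_mul_inr]
      simp [eval_monomial, mul_smul]

lemma my_eval_fst_zero (P : Polynomial (TrivSqZeroExt A N))
    (hP : ∀ n, (P.coeff n).fst = 0) (z : TrivSqZeroExt A N) :
    P.eval z = P.eval (inl z.fst) := by
  rw [Polynomial.eval_eq_sum, Polynomial.eval_eq_sum]
  rw [Polynomial.sum_def, Polynomial.sum_def]
  refine Finset.sum_congr rfl fun n _ => ?_
  have hc : P.coeff n = inr (P.coeff n).snd := by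
    ext
    · simp [hP n]
    · rfl
  rw [hc, my_inr_mul, my_inr_mul, fst_pow, fst_pow, fst_inl]

lemma my_fst_eval_fst_zero (P : Polynomial (TrivSqZeroExt A N))
    (hP : ∀ n, (P.coeff n).fst = 0) (z : TrivSqZeroExt A N) :
    (P.eval z).fst = 0 := by
  have h1 : (P.eval z).fst = ((fstHom A A N : TrivSqZeroExt A N →+* A) (P.eval z)) := rfl
  rw [h1, Polynomial.eval, Polynomial.hom_eval₂, ← Polynomial.eval_map, RingHom.comp_id,
    show P.map (fstHom A A N : TrivSqZeroExt A N →+* A) = 0 from ?_, Polynomial.eval_zero]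
  ext n
  simp [Polynomial.coeff_map, hP n]

lemma my_iter_deriv_fst_zero (P : Polynomial (TrivSqZeroExt A N))
    (hP : ∀ n, (P.coeff n).fst = 0) (j : ℕ) :
    ∀ n, ((derivative^[j] P).coeff n).fst = 0 := by
  induction j with
  | zero => exact hP
  | succ j ih =>
      rw [Function.iterate_succ_apply']
      intro n
      rw [Polynomial.coeff_derivative, fst_mul, ih, zero_mul]

lemma my_H_fst_zero (hm : ℕ →₀ N) (n : ℕ) :
    (((hm.sum fun i mi => Polynomial.C (inr mi : TrivSqZeroExt A N) * X ^ i)).coeff n).fst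
      = 0 := by
  have hfst : ∀ x : TrivSqZeroExt A N, x.fst = fstHom A A N x := fun _ => rfl
  rw [Finsupp.sum, Polynomial.finset_sum_coeff, hfst, map_sum]
  refine Finset.sum_eq_zero fun i _ => ?_
  rw [← hfst]
  simp [coeff_C_mul, coeff_X_pow, apply_ite (fst : TrivSqZeroExt A N → A)]

lemma my_iter_deriv_add {S : Type*} [CommRing S] (p q : Polynomial S) (j : ℕ) :
    derivative^[j] (p + q) = derivative^[j] p + derivative^[j] q := by
  induction j with
  | zero => rfl
  | succ j ih => rw [Function.iterate_succ_apply', ih, derivative_add,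
      Function.iterate_succ_apply', Function.iterate_succ_apply']

lemma my_key (f : Polynomial A) (hm : ℕ →₀ N) (j : ℕ) (a : A) (m : N) :
    ((derivative^[j] (f.map (inlHom A N)
        + hm.sum fun i mi => Polynomial.C (inr mi : TrivSqZeroExt A N) * X ^ i)).eval
      (inl a + inr m))
      = inl ((derivative^[j] f).eval a)
        + inr ((derivative^[j+1] f).eval a • m
            + ((derivative^[j]
                (hm.sum fun i mi =>
                  Polynomial.C (inr mi : TrivSqZeroExt A N) * X ^ i)).eval (inl a)).snd) := by
  set H := hm.sum fun i mi => Polynomial.C (inr mi : TrivSqZeroExt A N) * X ^ i with hH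
  have hshape : ∀ n, ((derivative^[j] H).coeff n).fst = 0 :=
    my_iter_deriv_fst_zero _ (my_H_fst_zero hm) j
  rw [my_iter_deriv_add, eval_add, Polynomial.iterate_derivative_map, my_eval_map_inl,
    my_eval_fst_zero _ hshape]
  have hfst : (inl a + inr m : TrivSqZeroExt A N).fst = a := by simp
  rw [hfst]
  have hV : (derivative^[j] H).eval (inl a)
      = inr (((derivative^[j] H).eval (inl a)).snd) := by
    ext
    · rw [my_fst_eval_fst_zero _ hshape]; simp
    · rfl
  conv_lhs => rw [hV]
  rw [add_assoc, ← inr_add, ← Function.iterate_succ_apply' derivative]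

end myaux


/-- The multiplicative set `U` of all non-zerodivisors on the module `M`. -/
def regOnSubmonoid (R M : Type*) [CommRing R] [AddCommGroup M] [Module R M] :
    Submonoid R where
  carrier := {a : R | ∀ m : M, a • m = 0 → m = 0}
  one_mem' := fun m hm => by simpa using hm
  mul_mem' := by
    intro a b ha hb m hm
    rw [mul_smul] at hm
    exact hb m (ha _ hm)

section

variable (R M : Type*) [CommRing R] [AddCommGroup M] [Module R M]

/-- The right-module structure on `U⁻¹M` over `(U⁻¹R)ᵐᵒᵖ` given by commutativity. -/
noncomputable local instance locMopModule :
    Module (Localization (regOnSubmonoid R M))ᵐᵒᵖ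
      (LocalizedModule (regOnSubmonoid R M) M) :=
  Module.compHom _ ((RingHom.id (Localization (regOnSubmonoid R M))).fromOpposite mul_comm)

local instance locCentral :
    IsCentralScalar (Localization (regOnSubmonoid R M))
      (LocalizedModule (regOnSubmonoid R M) M) :=
  ⟨fun _ _ => rfl⟩

/-- Suppose every non-zerodivisor on `M` is a non-zerodivisor of `R`,
let `U = M^reg`, `k ≥ 0`, and identify `T(R(+)M)` with `(U⁻¹R)(+)(U⁻¹M)`.  Write
`F = f + hε` with `f ∈ (U⁻¹R)[X]` and `h ∈ (U⁻¹M)[X]` (here `h` is recorded by its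
finitely supported coefficient function `hM`, and `hε` is the polynomial
`H = Σᵢ (inr hMᵢ)Xⁱ`).  Then `F⁽ʲ⁾(z) ∈ R(+)M` for all `z ∈ R(+)M` and `0 ≤ j ≤ k` iff
(i) `f⁽ʲ⁾(x) ∈ R` for all `x ∈ R`, `0 ≤ j ≤ k`, (ii) `f⁽ʲ⁾(x)·m ∈ M` for all `x ∈ R`,
`m ∈ M`, `0 ≤ j ≤ k+1`, and (iii) `h⁽ʲ⁾(x) ∈ M` for all `x ∈ R`, `0 ≤ j ≤ k`.  That is,
`Int⁽ᵏ⁾(R(+)M) = (Int⁽ᵏ⁺¹⁾_M(R) ∩ Int⁽ᵏ⁾(R)) + Int⁽ᵏ⁾(R, M)·ε`. -/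
theorem intPolyDeriv_idealization [Module Rᵐᵒᵖ M] [IsCentralScalar R M]
    (hU : ∀ a : R, (∀ m : M, a • m = 0 → m = 0) → a ∈ nonZeroDivisors R)
    (k : ℕ) (f : Polynomial (Localization (regOnSubmonoid R M)))
    (hM : ℕ →₀ LocalizedModule (regOnSubmonoid R M) M) :
    (∀ j ≤ k, ∀ (x : R) (mm : M),
        ((derivative^[j]
            (f.map (inlHom (Localization (regOnSubmonoid R M))
                (LocalizedModule (regOnSubmonoid R M) M)) +
              hM.sum fun i mi => Polynomial.C (inr mi) * X ^ i)).eval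
          (inl (algebraMap R (Localization (regOnSubmonoid R M)) x) +
            inr (LocalizedModule.mkLinearMap (regOnSubmonoid R M) M mm))).fst
            ∈ Set.range (algebraMap R (Localization (regOnSubmonoid R M))) ∧
        ((derivative^[j]
            (f.map (inlHom (Localization (regOnSubmonoid R M))
                (LocalizedModule (regOnSubmonoid R M) M)) +
              hM.sum fun i mi => Polynomial.C (inr mi) * X ^ i)).eval
          (inl (algebraMap R (Localization (regOnSubmonoid R M)) x) +
            inr (LocalizedModule.mkLinearMap (regOnSubmonoid R M) M mm))).snd
            ∈ Set.range ⇑(LocalizedModule.mkLinearMap (regOnSubmonoid R M) M))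
      ↔ ((∀ j ≤ k, ∀ x : R,
            (derivative^[j] f).eval (algebraMap R (Localization (regOnSubmonoid R M)) x)
              ∈ Set.range (algebraMap R (Localization (regOnSubmonoid R M)))) ∧
          (∀ j ≤ k + 1, ∀ (x : R) (mm : M),
            (derivative^[j] f).eval (algebraMap R (Localization (regOnSubmonoid R M)) x) •
                LocalizedModule.mkLinearMap (regOnSubmonoid R M) M mm
              ∈ Set.range ⇑(LocalizedModule.mkLinearMap (regOnSubmonoid R M) M)) ∧
          (∀ j ≤ k, ∀ x : R,
            ((derivative^[j]
                (hM.sum fun i mi =>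
                  Polynomial.C
                      (inr mi : TrivSqZeroExt (Localization (regOnSubmonoid R M))
                        (LocalizedModule (regOnSubmonoid R M) M)) * X ^ i)).eval
              (inl (algebraMap R (Localization (regOnSubmonoid R M)) x))).snd
              ∈ Set.range ⇑(LocalizedModule.mkLinearMap (regOnSubmonoid R M) M))) := by

  classical
  set A := Localization (regOnSubmonoid R M) with hA
  set N := LocalizedModule (regOnSubmonoid R M) M with hN
  have hfst' : ∀ (j : ℕ) (x : R) (mm : M),
      ((derivative^[j]
          (f.map (inlHom A N) + hM.sum fun i mi => Polynomial.C (inr mi) * X ^ i)).eval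
        (inl (algebraMap R A x) + inr (LocalizedModule.mkLinearMap (regOnSubmonoid R M) M mm))).fst
      = (derivative^[j] f).eval (algebraMap R A x) := by
    intro j x mm
    rw [my_key]
    simp
  have hsnd' : ∀ (j : ℕ) (x : R) (mm : M),
      ((derivative^[j]
          (f.map (inlHom A N) + hM.sum fun i mi => Polynomial.C (inr mi) * X ^ i)).eval
        (inl (algebraMap R A x) + inr (LocalizedModule.mkLinearMap (regOnSubmonoid R M) M mm))).snd
      = (derivative^[j+1] f).eval (algebraMap R A x) •
            LocalizedModule.mkLinearMap (regOnSubmonoid R M) M mm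
        + ((derivative^[j]
            (hM.sum fun i mi =>
              Polynomial.C (inr mi : TrivSqZeroExt A N) * X ^ i)).eval
          (inl (algebraMap R A x))).snd := by
    intro j x mm
    rw [my_key]
    simp
  simp +zetaDelta only [hfst', hsnd']
  constructor
  · intro h
    have hpsi : ∀ j ≤ k, ∀ x : R,
        ((derivative^[j]
            (hM.sum fun i mi =>
              Polynomial.C (inr mi : TrivSqZeroExt A N) * X ^ i)).eval
          (inl (algebraMap R A x))).snd
          ∈ Set.range ⇑(LocalizedModule.mkLinearMap (regOnSubmonoid R M) M) := by
      intro j hj x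
      have := (h j hj x 0).2
      simpa using this
    refine ⟨fun j hj x => (h j hj x 0).1, ?_, hpsi⟩
    intro j hj x mm
    cases j with
    | zero =>
        obtain ⟨r, hr⟩ := (h 0 (Nat.zero_le k) x 0).1
        refine ⟨r • mm, ?_⟩
        rw [map_smul, ← algebraMap_smul A r, hr]
    | succ j =>
        have hj' : j ≤ k := Nat.succ_le_succ_iff.mp hj
        obtain ⟨a, ha⟩ := (h j hj' x mm).2
        obtain ⟨b, hb⟩ := hpsi j hj' x
        refine ⟨a - b, ?_⟩
        rw [map_sub, ha, hb, add_sub_cancel_right]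
  · rintro ⟨h1, h2, h3⟩ j hj x mm
    refine ⟨h1 j hj x, ?_⟩
    obtain ⟨a, ha⟩ := h2 (j + 1) (Nat.succ_le_succ hj) x mm
    obtain ⟨b, hb⟩ := h3 j hj x
    exact ⟨a + b, by rw [map_add, ha, hb]⟩


end
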